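/- arXiv:0908.2528 — 4 statements merged into one kernel-verified Lean document; each statement's English description precedes it below -/
import Mathlib

section
/- Let M = (M_k)_{k≥0} be a non-decreasing logarithmically convex sequence of positive reals with M_0 = 1 satisfying M_k ≥ b_1 b_2^k (k!)^γ for some b_1, b_2 > 0 and γ ∈ (0,1). Let 𝒩(r) be the counting function of M (the smallest k realizing the supremum in ω_M(r) = sup_k ln(r^k/M_k)). Then there exists A_γ > 0 such that 𝒩(r) ≤ A_γ (e·r)^{1/γ} for all r ≥ 0. -/
lemma aux_pow_le_exp_factorial (n : ℕ) :
    (n : ℝ) ^ n ≤ Real.exp n * (Nat.factorial n : ℝ) := by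
  have h : (n : ℝ) ^ n / (Nat.factorial n : ℝ) ≤ Real.exp n := by
    calc (n : ℝ) ^ n / (Nat.factorial n : ℝ)
        ≤ ∑ i ∈ Finset.range (n + 1), (n : ℝ) ^ i / (Nat.factorial i : ℝ) := by
          apply Finset.single_le_sum (f := fun i => (n : ℝ) ^ i / (Nat.factorial i : ℝ))
          · intro i _
            positivity
          · simp
      _ ≤ Real.exp n := Real.sum_le_exp_of_nonneg (by positivity) _
  have hf : (0 : ℝ) < (Nat.factorial n : ℝ) := by
    exact_mod_cast Nat.factorial_pos n
  calc (n : ℝ) ^ n = (n : ℝ) ^ n / (Nat.factorial n : ℝ) * (Nat.factorial n : ℝ) := by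
        field_simp
    _ ≤ Real.exp n * (Nat.factorial n : ℝ) := by
        apply mul_le_mul_of_nonneg_right h hf.le

theorem stmt_4 (M : ℕ → ℝ) (hMpos : ∀ k, 0 < M k) (hM0 : M 0 = 1)
    (hmono : Monotone M)
    (hconv : ∀ k : ℕ, 1 ≤ k → M k ^ 2 ≤ M (k - 1) * M (k + 1))
    (b1 b2 γ : ℝ) (hb1 : 0 < b1) (hb2 : 0 < b2) (hγ : γ ∈ Set.Ioo (0:ℝ) 1)
    (hlow : ∀ k : ℕ, b1 * b2 ^ k * (Nat.factorial k : ℝ) ^ γ ≤ M k)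
    (ω : ℝ → ℝ) (hω0 : ω 0 = 0)
    (hω : ∀ r : ℝ, 0 < r → ω r = ⨆ k : ℕ, Real.log (r ^ k / M k))
    (N : ℝ → ℕ) (hN0 : N 0 = 0)
    (hN : ∀ r : ℝ, 0 < r → IsLeast {k : ℕ | Real.log (r ^ k / M k) = ω r} (N r)) :
    ∃ A : ℝ, 0 < A ∧ ∀ r : ℝ, 0 ≤ r → (N r : ℝ) ≤ A * (Real.exp 1 * r) ^ (1 / γ) := by
  obtain ⟨hγ0, hγ1⟩ := hγ
  set m : ℝ := min 1 b1 with hm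
  have hm0 : 0 < m := lt_min one_pos hb1
  set A : ℝ := max 1 ((m * b2)⁻¹ ^ (1 / γ)) with hA
  have hA0 : 0 < A := lt_of_lt_of_le one_pos (le_max_left _ _)
  refine ⟨A, hA0, ?_⟩
  intro r hr
  rcases eq_or_lt_of_le hr with h0 | hrpos
  · rw [← h0, hN0, mul_zero, Real.zero_rpow (one_div_pos.mpr hγ0).ne', mul_zero]
    simp
  -- r > 0
  have hRHS0 : 0 ≤ A * (Real.exp 1 * r) ^ (1 / γ) := by positivity
  set k : ℕ := N r with hk
  rcases Nat.eq_zero_or_pos k with hk0 | hk1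
  · rw [hk0]; exact_mod_cast hRHS0
  -- ω r ≥ 0
  have hωnn : 0 ≤ ω r := by
    rw [hω r hrpos]
    by_cases hb : BddAbove (Set.range fun k : ℕ => Real.log (r ^ k / M k))
    · have := le_ciSup hb 0
      simpa [hM0] using this
    · rw [Real.iSup_of_not_bddAbove hb]
  -- M k ≤ r ^ k
  have hmem : Real.log (r ^ k / M k) = ω r := (hN r hrpos).1
  have hMk : M k ≤ r ^ k := by
    have h1 : 1 ≤ r ^ k / M k := by
      rw [← Real.log_nonneg_iff (div_pos (by positivity) (hMpos k))]
      rw [hmem]; exact hωnn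
    calc M k = 1 * M k := (one_mul _).symm
      _ ≤ r ^ k / M k * M k := mul_le_mul_of_nonneg_right h1 (hMpos k).le
      _ = r ^ k := by rw [div_mul_eq_mul_div, mul_div_assoc, div_self (hMpos k).ne', mul_one]
  -- b1 * b2^k * (k!)^γ ≤ r^k
  have hlowk : b1 * b2 ^ k * (Nat.factorial k : ℝ) ^ γ ≤ r ^ k := (hlow k).trans hMk
  -- (k/e)^k ≤ k!
  have hke : ((k : ℝ) / Real.exp 1) ^ k ≤ (Nat.factorial k : ℝ) := by
    have h := aux_pow_le_exp_factorial k
    have hek : Real.exp (k : ℝ) = (Real.exp 1) ^ k := by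
      rw [← Real.exp_nat_mul]; ring_nf
    rw [div_pow, div_le_iff₀ (by positivity), ← hek]
    linarith
  -- key: (m * b2 * ((k/e)^γ))^k ≤ r^k
  set x : ℝ := ((k : ℝ) / Real.exp 1) ^ γ with hx
  have hxnn : 0 ≤ x := Real.rpow_nonneg (by positivity) _
  have hkey : (m * b2 * x) ^ k ≤ r ^ k := by
    have hmk : m ^ k ≤ b1 := by
      calc m ^ k ≤ m ^ 1 := pow_le_pow_of_le_one hm0.le (min_le_left _ _) hk1
        _ = m := pow_one m
        _ ≤ b1 := min_le_right _ _
    have hxk : x ^ k ≤ (Nat.factorial k : ℝ) ^ γ := by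
      rw [hx, ← Real.rpow_natCast (((k:ℝ)/Real.exp 1) ^ γ) k,
        ← Real.rpow_mul (by positivity), mul_comm γ (k:ℝ),
        Real.rpow_mul (by positivity), Real.rpow_natCast]
      exact Real.rpow_le_rpow (by positivity) hke hγ0.le
    calc (m * b2 * x) ^ k = m ^ k * b2 ^ k * x ^ k := by ring
      _ ≤ b1 * b2 ^ k * (Nat.factorial k : ℝ) ^ γ := by
          apply mul_le_mul (mul_le_mul_of_nonneg_right hmk (by positivity)) hxk
            (by positivity) (by positivity)
      _ ≤ r ^ k := hlowk
  have hbase : m * b2 * x ≤ r :=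
    (pow_le_pow_iff_left₀ (by positivity) hr hk1.ne').mp hkey
  have hxle : x ≤ r / (m * b2) := by
    rw [le_div_iff₀ (by positivity)]
    linarith [hbase]
  -- raise to power 1/γ
  have hfin : (k : ℝ) / Real.exp 1 ≤ (r / (m * b2)) ^ (1 / γ) := by
    have := Real.rpow_le_rpow hxnn hxle (by positivity : (0:ℝ) ≤ 1/γ)
    rwa [hx, ← Real.rpow_mul (by positivity), mul_one_div, div_self hγ0.ne',
      Real.rpow_one] at this
  have hsplit : (r / (m * b2)) ^ (1 / γ) = r ^ (1/γ) * ((m*b2)⁻¹) ^ (1/γ) := by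
    rw [div_eq_mul_inv, Real.mul_rpow hr (by positivity)]
  have he : Real.exp 1 ≤ (Real.exp 1) ^ (1/γ) := by
    nth_rewrite 1 [← Real.rpow_one (Real.exp 1)]
    apply Real.rpow_le_rpow_of_exponent_le (Real.one_le_exp one_pos.le)
    rw [le_one_div one_pos hγ0]; linarith
  have hAb : ((m*b2)⁻¹) ^ (1/γ) ≤ A := le_max_right _ _
  have hfinal : (k : ℝ) ≤ A * (Real.exp 1 * r) ^ (1 / γ) := by
    rw [Real.mul_rpow (by positivity) hr]
    calc (k : ℝ) = (k : ℝ) / Real.exp 1 * Real.exp 1 := by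
          field_simp
      _ ≤ (r / (m * b2)) ^ (1 / γ) * (Real.exp 1) ^ (1/γ) := by
          apply mul_le_mul hfin he (by positivity)
          positivity
      _ = ((m*b2)⁻¹) ^ (1/γ) * ((Real.exp 1) ^ (1/γ) * r ^ (1/γ)) := by
          rw [hsplit]; ring
      _ ≤ A * ((Real.exp 1) ^ (1/γ) * r ^ (1/γ)) := by
          apply mul_le_mul_of_nonneg_right hAb (by positivity)
  exact hfinal
end

section
/- Let M be a non-decreasing logarithmically convex sequence with M_0 = 1 satisfying M_k ≥ b_1 b_2^k (k!)^γ for some b_1, b_2 > 0 and γ ∈ (0,1), and let ω_M be its associated function. Then for all r_1, r_2 ≥ 0, |ω_M(r_2) − ω_M(r_1)| ≤ A_γ e^{1/γ} (r_1 + r_2)^{1/γ − 1} |r_2 − r_1|, where A_γ is a constant such that ω_M(r) ≤ A_γ r^{1/γ} and the counting function satisfies 𝒩(r) ≤ A_γ (er)^{1/γ}. -/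
open Real Filter Finset

private lemma pow_le_factorial_aux (m : ℕ) : ∀ k, m ≤ k → m ^ (k - m) ≤ Nat.factorial k := by
  intro k
  induction k with
  | zero => intro h; interval_cases m; simp [Nat.factorial]
  | succ n ih =>
    intro h
    rcases Nat.lt_or_ge m (n + 1) with h' | h'
    · have hm : m ≤ n := Nat.lt_succ_iff.mp h'
      have h1 : m ^ (n + 1 - m) = m * m ^ (n - m) := by
        rw [Nat.succ_sub hm, pow_succ']
      rw [h1, Nat.factorial_succ]
      exact Nat.mul_le_mul (by omega) (ih hm)
    · have : m = n + 1 := le_antisymm h h'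
      subst this
      simp [Nat.one_le_iff_ne_zero.mpr (Nat.factorial_ne_zero _)]

private lemma key_estimate (ω : ℝ → ℝ) (N : ℝ → ℕ) (c γ : ℝ) (hγ0 : 0 < γ) (hc0 : 0 < c)
    (hstep : ∀ t1 t2 : ℝ, 0 < t1 → t1 ≤ t2 →
      ω t2 - ω t1 ≤ (N t2 : ℝ) * (Real.log t2 - Real.log t1))
    (hNc : ∀ t : ℝ, 0 < t → (N t : ℝ) ≤ c * t ^ (1/γ)) :
    ∀ x y : ℝ, 0 < x → x ≤ y → ω y - ω x ≤ c * γ * (y ^ (1/γ) - x ^ (1/γ)) := by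
  intro x y hx hxy
  have hy : 0 < y := hx.trans_le hxy
  set L : ℝ := Real.log y - Real.log x with hL
  have hL0 : 0 ≤ L := sub_nonneg.mpr (Real.log_le_log hx hxy)
  have Hn : ∀ n : ℕ, 1 ≤ n →
      ω y - ω x ≤ Real.exp (L / (γ * n)) * (c * γ * (y ^ (1/γ) - x ^ (1/γ))) := by
    intro n hn
    have hn0 : (0:ℝ) < (n:ℝ) := by exact_mod_cast Nat.lt_of_lt_of_le Nat.zero_lt_one hn
    set D : ℝ := L / n with hD
    set s : ℝ := D / γ with hs
    have hD0 : 0 ≤ D := div_nonneg hL0 hn0.le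
    have hs0 : 0 ≤ s := div_nonneg hD0 hγ0.le
    have hDs : D = γ * s := by rw [hs]; field_simp [hγ0.ne']
    have hsL : s = L / (γ * n) := by rw [hs, hD, div_div, mul_comm (n:ℝ) γ]
    have htpos : ∀ z : ℝ, 0 < x * Real.exp (z * D) := fun z => mul_pos hx (exp_pos _)
    have ht0 : x * Real.exp ((0:ℝ) * D) = x := by norm_num
    have htn : x * Real.exp ((n:ℝ) * D) = y := by
      have h1 : (n:ℝ) * D = L := by rw [hD]; field_simp
      rw [h1, hL, Real.exp_sub, Real.exp_log hy, Real.exp_log hx]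
      field_simp
    have hurw : ∀ z : ℝ, (x * Real.exp (z * D)) ^ (1/γ)
        = x ^ (1/γ) * Real.exp (z * s) := by
      intro z
      rw [Real.mul_rpow hx.le (exp_pos _).le, ← Real.exp_mul]
      congr 1
      rw [hDs]; field_simp [hγ0.ne']
    have hperstep : ∀ i : ℕ,
        ω (x * Real.exp ((i+1:ℕ) * D)) - ω (x * Real.exp ((i:ℕ) * D)) ≤
        Real.exp s * (c * γ * ((x * Real.exp ((i+1:ℕ) * D)) ^ (1/γ)
          - (x * Real.exp ((i:ℕ) * D)) ^ (1/γ))) := by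
      intro i
      have hii : ((i:ℝ)) * D ≤ ((i+1:ℕ):ℝ) * D := by
        push_cast; nlinarith
      have hti : x * Real.exp ((i:ℕ) * D) ≤ x * Real.exp ((i+1:ℕ) * D) :=
        mul_le_mul_of_nonneg_left (Real.exp_le_exp.mpr hii) hx.le
      have hlogd : Real.log (x * Real.exp ((i+1:ℕ) * D)) - Real.log (x * Real.exp ((i:ℕ) * D))
          = D := by
        rw [Real.log_mul hx.ne' (exp_pos _).ne', Real.log_mul hx.ne' (exp_pos _).ne',
          Real.log_exp, Real.log_exp]
        push_cast; ring
      have h1 := hstep _ _ (htpos (i:ℕ)) hti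
      rw [hlogd] at h1
      have h2 : (N (x * Real.exp ((i+1:ℕ) * D)) : ℝ)
          ≤ c * (x * Real.exp ((i+1:ℕ) * D)) ^ (1/γ) := hNc _ (htpos _)
      have h3 := h1.trans (mul_le_mul_of_nonneg_right h2 hD0)
      refine h3.trans ?_
      rw [hurw ((i+1:ℕ):ℝ), hurw ((i:ℕ):ℝ)]
      have hsplit : Real.exp (((i+1:ℕ):ℝ) * s) = Real.exp ((i:ℝ) * s) * Real.exp s := by
        rw [← Real.exp_add]; push_cast; ring
      rw [hsplit]
      have hkey : s * Real.exp s ≤ Real.exp s * (Real.exp s - 1) := by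
        nlinarith [Real.add_one_le_exp s, (exp_pos s).le]
      have hfac : (0:ℝ) ≤ c * γ * x ^ (1/γ) * Real.exp ((i:ℝ) * s) :=
        mul_nonneg (mul_nonneg (mul_nonneg hc0.le hγ0.le)
          (Real.rpow_nonneg hx.le _)) (exp_pos _).le
      have := mul_le_mul_of_nonneg_left hkey hfac
      rw [hDs]
      nlinarith [this]
    -- telescoping
    have htel := Finset.sum_range_sub (fun i : ℕ => ω (x * Real.exp (i * D))) n
    have hutel := Finset.sum_range_sub (fun i : ℕ => (x * Real.exp (i * D)) ^ (1/γ)) n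
    simp only [Nat.cast_zero] at htel hutel
    rw [ht0, htn] at htel hutel
    rw [← hsL, ← htel, ← hutel, Finset.mul_sum, Finset.mul_sum]
    exact Finset.sum_le_sum fun i _ => hperstep i
  -- pass to the limit
  have hlim : Filter.Tendsto
      (fun n : ℕ => Real.exp (L / (γ * n)) * (c * γ * (y ^ (1/γ) - x ^ (1/γ))))
      Filter.atTop (nhds (c * γ * (y ^ (1/γ) - x ^ (1/γ)))) := by
    have h1 : Filter.Tendsto (fun n : ℕ => L / (γ * n)) Filter.atTop (nhds 0) := by
      have h0 := tendsto_const_div_atTop_nhds_zero_nat (L / γ)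
      refine h0.congr fun n => ?_
      rw [div_div]
    have h2 := (Real.continuous_exp.tendsto 0).comp h1
    rw [Real.exp_zero] at h2
    have h3 := h2.mul_const (c * γ * (y ^ (1/γ) - x ^ (1/γ)))
    simpa using h3
  exact ge_of_tendsto hlim (Filter.eventually_atTop.mpr ⟨1, Hn⟩)

theorem stmt_5 (M : ℕ → ℝ) (hMpos : ∀ k, 0 < M k) (hM0 : M 0 = 1)
    (hmono : Monotone M)
    (hconv : ∀ k : ℕ, 1 ≤ k → M k ^ 2 ≤ M (k - 1) * M (k + 1))
    (b1 b2 γ : ℝ) (hb1 : 0 < b1) (hb2 : 0 < b2) (hγ : γ ∈ Set.Ioo (0:ℝ) 1)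
    (hlow : ∀ k : ℕ, b1 * b2 ^ k * (Nat.factorial k : ℝ) ^ γ ≤ M k)
    (ω : ℝ → ℝ) (hω0 : ω 0 = 0)
    (hω : ∀ r : ℝ, 0 < r → ω r = ⨆ k : ℕ, Real.log (r ^ k / M k))
    (N : ℝ → ℕ) (hN0 : N 0 = 0)
    (hN : ∀ r : ℝ, 0 < r → IsLeast {k : ℕ | Real.log (r ^ k / M k) = ω r} (N r))
    (A : ℝ) (hA : 0 < A)
    (hωA : ∀ r : ℝ, 0 ≤ r → ω r ≤ A * r ^ (1 / γ))
    (hNA : ∀ r : ℝ, 0 ≤ r → (N r : ℝ) ≤ A * (Real.exp 1 * r) ^ (1 / γ)) :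
    ∀ r1 r2 : ℝ, 0 ≤ r1 → 0 ≤ r2 →
      |ω r2 - ω r1| ≤
        A * Real.exp 1 ^ (1 / γ) * (r1 + r2) ^ (1 / γ - 1) * |r2 - r1| := by
  obtain ⟨hγ0, hγ1⟩ := hγ
  have hp1 : (1:ℝ) ≤ 1 / γ := one_le_one_div hγ0 hγ1.le
  have hp0 : (0:ℝ) < 1 / γ := by positivity
  set c : ℝ := A * Real.exp 1 ^ (1 / γ) with hc
  have hc0 : 0 < c := by
    apply mul_pos hA (rpow_pos_of_pos (exp_pos 1) _)
  -- boundedness of the defining family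
  have hbdd : ∀ r : ℝ, 0 < r → BddAbove (Set.range fun k : ℕ => Real.log (r ^ k / M k)) := by
    intro r hr
    obtain ⟨m0, hm0⟩ := exists_nat_ge (Real.exp ((Real.log r - Real.log b2) / γ))
    set m := m0 + 1 with hm
    have hm1 : (1:ℝ) ≤ (m:ℝ) := by exact_mod_cast Nat.le_add_left 1 m0
    have hmR : Real.exp ((Real.log r - Real.log b2) / γ) ≤ (m:ℝ) := by
      apply hm0.trans; exact_mod_cast Nat.le_succ m0
    have hlogm : (Real.log r - Real.log b2) / γ ≤ Real.log m := by
      rw [← Real.log_exp ((Real.log r - Real.log b2) / γ)]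
      exact Real.log_le_log (exp_pos _) hmR
    have hd : Real.log r - Real.log b2 ≤ γ * Real.log m := by
      rw [div_le_iff₀ hγ0] at hlogm; linarith [hlogm]
    have hlogm0 : 0 ≤ Real.log m := Real.log_nonneg hm1
    -- bound for k ≥ m
    have htail : ∀ k : ℕ, m ≤ k →
        Real.log (r ^ k / M k) ≤ γ * m * Real.log m - Real.log b1 := by
      intro k hk
      have hkR : (m:ℝ) ≤ (k:ℝ) := by exact_mod_cast hk
      have hfac : ((m:ℝ) ^ (k - m)) ≤ (Nat.factorial k : ℝ) := by
        exact_mod_cast pow_le_factorial_aux m k hk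
      have hlfac : ((k:ℝ) - m) * Real.log m ≤ Real.log (Nat.factorial k) := by
        have := Real.log_le_log (by positivity) hfac
        rwa [Real.log_pow, Nat.cast_sub hk] at this
      have hlM : Real.log b1 + k * Real.log b2 + γ * Real.log (Nat.factorial k)
          ≤ Real.log (M k) := by
        have h1 := Real.log_le_log (by positivity) (hlow k)
        rwa [Real.log_mul (by positivity) (by positivity),
          Real.log_mul (by positivity) (by positivity), Real.log_pow,
          Real.log_rpow (by exact_mod_cast (Nat.factorial_pos k))] at h1
      rw [Real.log_div (by positivity) (hMpos k).ne', Real.log_pow]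
      have h2 : (k:ℝ) * (Real.log r - Real.log b2) ≤ (k:ℝ) * (γ * Real.log m) :=
        mul_le_mul_of_nonneg_left hd (Nat.cast_nonneg k)
      have h3 : γ * (((k:ℝ) - m) * Real.log m) ≤ γ * Real.log (Nat.factorial k) :=
        mul_le_mul_of_nonneg_left hlfac hγ0.le
      nlinarith [h2, h3, hlM]
    -- combine with the finitely many initial terms
    have hne : (Finset.range m).Nonempty := ⟨0, by simp [hm]⟩
    refine ⟨max (γ * m * Real.log m - Real.log b1)
      ((Finset.range m).sup' hne fun k => Real.log (r ^ k / M k)), ?_⟩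
    rintro x ⟨k, rfl⟩
    rcases lt_or_ge k m with hk | hk
    · exact le_max_of_le_right
        (Finset.le_sup' (fun k => Real.log (r ^ k / M k)) (Finset.mem_range.mpr hk))
    · exact le_max_of_le_left (htail k hk)
  have hsup : ∀ r : ℝ, 0 < r → ∀ k : ℕ, Real.log (r ^ k / M k) ≤ ω r := by
    intro r hr k
    rw [hω r hr]
    exact le_ciSup (hbdd r hr) k
  have hattain : ∀ r : ℝ, 0 < r → Real.log (r ^ N r / M (N r)) = ω r :=
    fun r hr => (hN r hr).1
  have hωpos : ∀ r : ℝ, 0 ≤ r → 0 ≤ ω r := by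
    intro r hr
    rcases hr.eq_or_lt with rfl | hr
    · rw [hω0]
    · have := hsup r hr 0
      simpa [hM0] using this
  -- monotonicity
  have hmono' : ∀ x y : ℝ, 0 ≤ x → x ≤ y → ω x ≤ ω y := by
    intro x y hx hxy
    rcases hx.eq_or_lt with rfl | hx
    · rcases hxy.eq_or_lt with rfl | hy
      · exact le_rfl
      · rw [hω0]; exact hωpos y hxy
    · have hy : 0 < y := hx.trans_le hxy
      rw [← hattain x hx]
      refine (Real.log_le_log (div_pos (pow_pos hx _) (hMpos _)) ?_).trans (hsup y hy (N x))
      exact (div_le_div_iff_of_pos_right (hMpos _)).mpr (pow_le_pow_left₀ hx.le hxy _)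
  -- step estimate
  have hstep : ∀ t1 t2 : ℝ, 0 < t1 → t1 ≤ t2 →
      ω t2 - ω t1 ≤ (N t2 : ℝ) * (Real.log t2 - Real.log t1) := by
    intro t1 t2 ht1 ht12
    have ht2 : 0 < t2 := ht1.trans_le ht12
    have h1 : Real.log (t1 ^ N t2 / M (N t2)) ≤ ω t1 := hsup t1 ht1 (N t2)
    have h2 : ω t2 = Real.log (t2 ^ N t2 / M (N t2)) := (hattain t2 ht2).symm
    rw [h2]
    rw [Real.log_div (ne_of_gt (pow_pos ht1 _)) (hMpos _).ne', Real.log_pow] at h1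
    rw [Real.log_div (ne_of_gt (pow_pos ht2 _)) (hMpos _).ne', Real.log_pow]
    linarith [h1]
  -- key integral-type estimate
  have hNc : ∀ t : ℝ, 0 < t → (N t : ℝ) ≤ c * t ^ (1/γ) := by
    intro t ht
    have h := hNA t ht.le
    rwa [Real.mul_rpow (exp_pos 1).le ht.le, ← mul_assoc] at h
  have hkey := key_estimate ω N c γ hγ0 hc0 hstep hNc
  -- Bernoulli consequence
  have hBer : ∀ x y : ℝ, 0 < x → x ≤ y →
      c * γ * (y ^ (1/γ) - x ^ (1/γ)) ≤ c * (x + y) ^ (1/γ - 1) * (y - x) := by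
    intro x y hx hxy
    have hy : 0 < y := hx.trans_le hxy
    have hber := one_add_mul_self_le_rpow_one_add
      (s := x / y - 1) (by nlinarith [div_nonneg hx.le hy.le]) hp1
    have hrw : 1 + (x / y - 1) = x / y := by ring
    rw [hrw] at hber
    have hyp : 0 < y ^ (1/γ) := rpow_pos_of_pos hy _
    have hdiv : (x / y) ^ (1/γ) = x ^ (1/γ) / y ^ (1/γ) :=
      Real.div_rpow hx.le hy.le _
    rw [hdiv] at hber
    -- multiply by y^(1/γ)
    have h1 : y ^ (1/γ) + (1/γ) * (x / y - 1) * y ^ (1/γ) ≤ x ^ (1/γ) := by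
      have := mul_le_mul_of_nonneg_right hber hyp.le
      calc y ^ (1/γ) + (1/γ) * (x / y - 1) * y ^ (1/γ)
          = (1 + (1/γ) * (x / y - 1)) * y ^ (1/γ) := by ring
        _ ≤ (x ^ (1/γ) / y ^ (1/γ)) * y ^ (1/γ) := this
        _ = x ^ (1/γ) := by field_simp
    have hys : y ^ (1/γ) / y = y ^ (1/γ - 1) := by
      rw [Real.rpow_sub hy, Real.rpow_one]
    have h2 : γ * (y ^ (1/γ) - x ^ (1/γ)) ≤ y ^ (1/γ - 1) * (y - x) := by
      have hx' : (1/γ) * (1 - x / y) * y ^ (1/γ) = (1/γ) * y ^ (1/γ - 1) * (y - x) := by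
        rw [← hys]; field_simp
      have h3 : y ^ (1/γ) - x ^ (1/γ) ≤ (1/γ) * y ^ (1/γ - 1) * (y - x) := by
        rw [← hx']; nlinarith [h1]
      have := mul_le_mul_of_nonneg_left h3 hγ0.le
      calc γ * (y ^ (1/γ) - x ^ (1/γ)) ≤ γ * ((1/γ) * y ^ (1/γ - 1) * (y - x)) := this
        _ = y ^ (1/γ - 1) * (y - x) := by field_simp
    have h4 : y ^ (1/γ - 1) ≤ (x + y) ^ (1/γ - 1) :=
      Real.rpow_le_rpow hy.le (by linarith) (by linarith)
    calc c * γ * (y ^ (1/γ) - x ^ (1/γ)) = c * (γ * (y ^ (1/γ) - x ^ (1/γ))) := by ring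
      _ ≤ c * (y ^ (1/γ - 1) * (y - x)) := mul_le_mul_of_nonneg_left h2 hc0.le
      _ ≤ c * ((x + y) ^ (1/γ - 1) * (y - x)) := by
          apply mul_le_mul_of_nonneg_left _ hc0.le
          exact mul_le_mul_of_nonneg_right h4 (by linarith)
      _ = c * (x + y) ^ (1/γ - 1) * (y - x) := by ring
  -- main one-sided estimate
  have main : ∀ x y : ℝ, 0 ≤ x → x ≤ y →
      ω y - ω x ≤ c * (x + y) ^ (1/γ - 1) * (y - x) := by
    intro x y hx hxy
    rcases hx.eq_or_lt with rfl | hx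
    · rcases hxy.eq_or_lt with rfl | hy
      · simp [hω0]
      · rw [hω0, sub_zero, zero_add, sub_zero]
        have h1 : ω y ≤ A * y ^ (1/γ) := hωA y hy.le
        have h2 : y ^ (1/γ) = y ^ (1/γ - 1) * y := by
          rw [← Real.rpow_add_one hy.ne']
          ring_nf
        have h3 : (1:ℝ) ≤ Real.exp 1 ^ (1/γ) :=
          Real.one_le_rpow (by linarith [Real.add_one_le_exp 1]) hp0.le
        have hyp : 0 ≤ y ^ (1/γ - 1) * y := by positivity
        calc ω y ≤ A * y ^ (1/γ) := h1
          _ = A * (y ^ (1/γ - 1) * y) := by rw [h2]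
          _ ≤ A * Real.exp 1 ^ (1/γ) * (y ^ (1/γ - 1) * y) := by
              nlinarith [mul_nonneg (mul_nonneg hA.le hyp) (sub_nonneg.mpr h3)]
          _ = c * y ^ (1/γ - 1) * y := by rw [hc]; ring
    · exact (hkey x y hx hxy).trans (hBer x y hx hxy)
  intro r1 r2 hr1 hr2
  rcases le_total r1 r2 with h | h
  · rw [abs_of_nonneg (sub_nonneg.mpr (hmono' r1 r2 hr1 h)),
      abs_of_nonneg (sub_nonneg.mpr h)]
    exact main r1 r2 hr1 h
  · rw [abs_sub_comm (ω r2), abs_sub_comm r2, add_comm r1,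
      abs_of_nonneg (sub_nonneg.mpr (hmono' r2 r1 hr2 h)),
      abs_of_nonneg (sub_nonneg.mpr h)]
    exact main r2 r1 hr2 h
end

section
/- Let C be an open convex acute cone in ℝⁿ and b a convex continuous positively homogeneous degree-1 function on cl(C) with |b(y)| ≤ r‖y‖ for some r > 0 and all y ∈ cl(C). Then U(b,C) = {ξ ∈ ℝⁿ : −⟨ξ,y⟩ ≤ b(y) ∀y ∈ C} is contained in C* + B_r, where C* = {ξ : ⟨ξ,x⟩ ≥ 0 ∀x ∈ C} is the dual cone and B_r is the closed ball of radius r centered at the origin. -/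
open RealInnerProductSpace Pointwise

theorem stmt_12 (n : ℕ) (C : Set (EuclideanSpace ℝ (Fin n)))
    (hCopen : IsOpen C) (hCconv : Convex ℝ C) (hCne : C.Nonempty)
    (hCcone : ∀ x ∈ C, ∀ t : ℝ, 0 < t → t • x ∈ C)
    (hacute : ∀ x : EuclideanSpace ℝ (Fin n), x ≠ 0 →
      ¬ (x ∈ closure C ∧ -x ∈ closure C))
    (b : EuclideanSpace ℝ (Fin n) → ℝ)
    (hbconv : ConvexOn ℝ (closure C) b) (hbcont : ContinuousOn b (closure C))
    (hbhom : ∀ y ∈ closure C, ∀ t : ℝ, 0 < t → b (t • y) = t * b y)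
    (r : ℝ) (hr : 0 < r) (hbr : ∀ y ∈ closure C, |b y| ≤ r * ‖y‖) :
    {ξ : EuclideanSpace ℝ (Fin n) | ∀ y ∈ C, -⟪ξ, y⟫ ≤ b y} ⊆
      {ξ : EuclideanSpace ℝ (Fin n) | ∀ x ∈ C, 0 ≤ ⟪ξ, x⟫} +
        Metric.closedBall (0 : EuclideanSpace ℝ (Fin n)) r := by
  intro ξ hξ
  -- C as a convex cone
  have haddC : ∀ u ∈ C, ∀ v ∈ C, u + v ∈ C := by
    intro u hu v hv
    have hmid : (1/2 : ℝ) • u + (1/2 : ℝ) • v ∈ C :=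
      hCconv hu hv (by norm_num) (by norm_num) (by norm_num)
    have := hCcone _ hmid 2 (by norm_num)
    simpa [smul_add, smul_smul] using this
  let K0 : ConvexCone ℝ (EuclideanSpace ℝ (Fin n)) :=
    { carrier := C
      smul_mem' := fun c hc x hx => hCcone x hx c hc
      add_mem' := fun u hu v hv => haddC u hu v hv }
  let K : ConvexCone ℝ (EuclideanSpace ℝ (Fin n)) := K0.closure
  have hKcoe : (K : Set (EuclideanSpace ℝ (Fin n))) = closure C := K0.coe_closure
  have hKne : (K : Set (EuclideanSpace ℝ (Fin n))).Nonempty := by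
    rw [hKcoe]; exact hCne.mono subset_closure
  have hKcl : IsClosed (K : Set (EuclideanSpace ℝ (Fin n))) := by rw [hKcoe]; exact isClosed_closure
  -- dual cone of closure C
  set D : Set (EuclideanSpace ℝ (Fin n)) := ((ProperCone.innerDual (K : Set (EuclideanSpace ℝ (Fin n)))) : Set (EuclideanSpace ℝ (Fin n))) with hD
  have hDconv : Convex ℝ D := (ProperCone.innerDual (K : Set (EuclideanSpace ℝ (Fin n)))).convex
  have hDclosed : IsClosed D := (ProperCone.innerDual (K : Set (EuclideanSpace ℝ (Fin n)))).isClosed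
  have hDne : D.Nonempty := ⟨0, (ProperCone.innerDual (K : Set (EuclideanSpace ℝ (Fin n)))).zero_mem⟩
  -- project ξ onto D
  obtain ⟨p, hpD, hinf⟩ :=
    exists_norm_eq_iInf_of_complete_convex hDne hDclosed.isComplete hDconv ξ
  have hinner : ∀ w ∈ D, ⟪ξ - p, w - p⟫ ≤ 0 :=
    (norm_eq_iInf_iff_real_inner_le_zero hDconv hpD).1 hinf
  set η : EuclideanSpace ℝ (Fin n) := ξ - p with hη
  -- ⟪η, p⟫ = 0
  have h0 : ⟪η, p⟫ = 0 := by
    have h1 := hinner 0 (ProperCone.innerDual (K : Set (EuclideanSpace ℝ (Fin n)))).zero_mem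
    have h2 := hinner ((2 : ℝ) • p) (ProperCone.mem_innerDual.2 fun x hx => by rw [inner_smul_right]; exact mul_nonneg (by norm_num) (ProperCone.mem_innerDual.1 hpD hx))
    rw [zero_sub, inner_neg_right] at h1
    have h2' : ⟪η, p⟫ ≤ 0 := by
      have : (2 : ℝ) • p - p = p := by
        rw [two_smul]; abel
      rwa [this] at h2
    linarith
  -- ⟪η, w⟫ ≤ 0 for all w ∈ D
  have hneg : ∀ w ∈ D, ⟪η, w⟫ ≤ 0 := by
    intro w hw
    have := hinner (w + p) ((ProperCone.innerDual (K : Set (EuclideanSpace ℝ (Fin n)))).add_mem hw hpD)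
    rwa [add_sub_cancel_right] at this
  -- hence -η ∈ closure C by biduality
  have hmem : -η ∈ closure C := by
    have hbi : (ProperCone.innerDual ((ProperCone.innerDual (K : Set (EuclideanSpace ℝ (Fin n)))) : Set (EuclideanSpace ℝ (Fin n))) : Set (EuclideanSpace ℝ (Fin n))) = (K : Set (EuclideanSpace ℝ (Fin n))) := by
      obtain ⟨P, hP⟩ := CanLift.prf (β := ProperCone ℝ (EuclideanSpace ℝ (Fin n))) K ⟨hKne, hKcl⟩
      have hPK : (P : Set (EuclideanSpace ℝ (Fin n))) = (K : Set (EuclideanSpace ℝ (Fin n))) := by rw [← hP]; rfl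
      rw [← hPK, ProperCone.innerDual_innerDual]
    have : -η ∈ (ProperCone.innerDual ((ProperCone.innerDual (K : Set (EuclideanSpace ℝ (Fin n)))) : Set (EuclideanSpace ℝ (Fin n))) : Set (EuclideanSpace ℝ (Fin n))) := by
      rw [SetLike.mem_coe, ProperCone.mem_innerDual]
      intro w hw
      have := hneg w hw
      rw [inner_neg_right, real_inner_comm]
      linarith
    rw [hbi] at this
    rwa [← hKcoe]
  -- extend the inequality to closure C
  have hext : ∀ y ∈ closure C, -⟪ξ, y⟫ ≤ b y := by
    intro y hy
    have hnb : (nhdsWithin y C).NeBot := mem_closure_iff_nhdsWithin_neBot.mp hy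
    have hcont : ContinuousWithinAt (fun z => b z + ⟪ξ, z⟫) C y := by
      refine ContinuousWithinAt.add ?_ ?_
      · exact ((hbcont y hy).mono subset_closure)
      · exact (continuous_const.inner continuous_id).continuousWithinAt
    have hnonneg : ∀ z ∈ C, 0 ≤ b z + ⟪ξ, z⟫ := fun z hz => by
      have := hξ z hz; linarith
    have : 0 ≤ b y + ⟪ξ, y⟫ := by
      refine ge_of_tendsto hcont.tendsto ?_
      exact eventually_nhdsWithin_of_forall hnonneg
    linarith
  -- bound ‖η‖
  have hηr : ‖η‖ ≤ r := by
    have h1 : -⟪ξ, -η⟫ ≤ b (-η) := hext _ hmem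
    have h2 : b (-η) ≤ r * ‖η‖ := by
      have := hbr _ hmem
      calc b (-η) ≤ |b (-η)| := le_abs_self _
        _ ≤ r * ‖-η‖ := this
        _ = r * ‖η‖ := by rw [norm_neg]
    have h3 : ⟪ξ, η⟫ ≤ r * ‖η‖ := by
      rw [inner_neg_right, neg_neg] at h1; linarith
    have h0' : ⟪p, η⟫ = 0 := by rw [real_inner_comm]; exact h0
    have h4 : ⟪ξ, η⟫ = ‖η‖ ^ 2 := by
      have hxp : ξ = η + p := by rw [hη]; abel
      rw [hxp, inner_add_left, h0', add_zero, real_inner_self_eq_norm_sq]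
    rcases eq_or_ne η 0 with h | h
    · simp [h]; linarith
    · have hpos : 0 < ‖η‖ := norm_pos_iff.mpr h
      nlinarith [h4 ▸ h3]
  -- conclude
  refine Set.mem_add.mpr ⟨p, ?_, η, ?_, ?_⟩
  · intro x hx
    rw [real_inner_comm]
    exact ProperCone.mem_innerDual.1 hpD (by rw [hKcoe]; exact subset_closure hx)
  · simpa [Metric.mem_closedBall, dist_zero_right] using hηr
  · show p + η = ξ
    rw [hη]; abel
end

section
/- Let C be an open convex acute cone in ℝⁿ, b a convex continuous positively homogeneous degree-1 function on cl(C), and U = U(b,C) = {ξ : −⟨ξ,y⟩ ≤ b(y) ∀y ∈ C}. For y ∈ C and a positive integer m, let g(ξ) = −⟨ξ,y⟩ + m·ln(1+‖ξ‖). Then there exists a constant d > 0, depending on b, C and m but not on y, such that sup_{ξ∈U} g(ξ) ≤ b(y) + d·m + 3m·ln(1 + 1/Δ_C(y)) + 2m·ln(1 + ‖y‖), where Δ_C(y) denotes the distance from y to the boundary of C. -/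
open RealInnerProductSpace


/-- Analytic lemma: μ log(1+s) - δ s ≤ μ log μ + μ log(1+1/δ). -/
lemma aux_log (μ δ s : ℝ) (hμ : 1 ≤ μ) (hδ : 0 < δ) (hs : 0 ≤ s) :
    μ * Real.log (1 + s) - δ * s ≤ μ * Real.log μ + μ * Real.log (1 + 1/δ) := by
  have hμ0 : 0 < μ := lt_of_lt_of_le one_pos hμ
  have hlogμ : 0 ≤ Real.log μ := Real.log_nonneg hμ
  have hlogδ : 0 ≤ Real.log (1 + 1/δ) := Real.log_nonneg (le_add_of_nonneg_right (by positivity))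
  rcases le_or_gt μ δ with h | h
  · -- log(1+s) ≤ s
    have h1 : Real.log (1 + s) ≤ s := by
      have := Real.log_le_sub_one_of_pos (x := 1 + s) (by linarith)
      linarith
    have : μ * Real.log (1 + s) ≤ δ * s := by nlinarith
    nlinarith
  · -- log(1+s) ≤ log(μ/δ) + (1+s)δ/μ - 1
    have h1 : Real.log ((1 + s) * (δ / μ)) ≤ (1 + s) * (δ / μ) - 1 :=
      Real.log_le_sub_one_of_pos (by positivity)
    have h2 : Real.log ((1 + s) * (δ / μ)) = Real.log (1 + s) + Real.log δ - Real.log μ := by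
      rw [Real.log_mul (by positivity) (by positivity), Real.log_div hδ.ne' hμ0.ne']
      ring
    have h3 : Real.log (1 + s) ≤ Real.log μ - Real.log δ + (1 + s) * (δ / μ) - 1 := by
      rw [h2] at h1; linarith
    have h4 : μ * ((1 + s) * (δ / μ)) = δ * (1 + s) := by field_simp
    have h5 : -Real.log δ ≤ Real.log (1 + 1/δ) := by
      rw [← Real.log_inv, ← one_div]
      exact Real.log_le_log (by positivity) (by linarith)
    have h6 : μ * Real.log (1 + s) ≤ μ * (Real.log μ - Real.log δ + (1 + s) * (δ / μ) - 1) :=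
      mul_le_mul_of_nonneg_left h3 hμ0.le
    have h7 : μ * (Real.log μ - Real.log δ + (1 + s) * (δ / μ) - 1)
        = μ * Real.log μ + μ * (-Real.log δ) + δ * (1 + s) - μ := by
      rw [← h4]; ring
    have h8 : μ * (-Real.log δ) ≤ μ * Real.log (1 + 1/δ) :=
      mul_le_mul_of_nonneg_left h5 hμ0.le
    nlinarith

/-- Segment lemma: if y ∈ C open and z ∉ C, then infDist y (frontier C) ≤ dist y z. -/
lemma aux_seg {E : Type*} [NormedAddCommGroup E] [NormedSpace ℝ E]
    {C : Set E} (hCopen : IsOpen C) {y z : E} (hy : y ∈ C) (hz : z ∉ C) :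
    Metric.infDist y (frontier C) ≤ dist y z := by
  set h : ℝ → E := fun t => y + t • (z - y) with hh
  have hcont : Continuous h := by continuity
  set B : Set ℝ := Set.Ici (0:ℝ) ∩ h ⁻¹' Cᶜ with hB
  have hBclosed : IsClosed B := isClosed_Ici.inter (hCopen.isClosed_compl.preimage hcont)
  have h1B : (1:ℝ) ∈ B := by
    constructor
    · exact (zero_le_one : (0:ℝ) ≤ 1)
    · simp only [Set.mem_preimage, Set.mem_compl_iff, hh, one_smul]
      simpa using hz
  have hbdd : BddBelow B := ⟨0, fun t ht => ht.1⟩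
  set T := sInf B with hT
  have hTB : T ∈ B := hBclosed.csInf_mem ⟨1, h1B⟩ hbdd
  have hT1 : T ≤ 1 := csInf_le hbdd h1B
  have hT0 : 0 ≤ T := hTB.1
  have hTnotC : h T ∉ C := hTB.2
  have hTpos : 0 < T := by
    rcases hT0.lt_or_eq with h' | h'
    · exact h'
    · exfalso; apply hTnotC; rw [← h']; simp [hh, hy]
  have hmemC : ∀ t ∈ Set.Ioo (0:ℝ) T, h t ∈ C := by
    intro t ht
    by_contra hc
    exact absurd (csInf_le hbdd ⟨ht.1.le, hc⟩) (not_le.2 ht.2)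
  have hclos : h T ∈ closure C := by
    have htend : Filter.Tendsto h (nhdsWithin T (Set.Iio T)) (nhds (h T)) :=
      (hcont.tendsto T).mono_left nhdsWithin_le_nhds
    refine mem_closure_of_tendsto htend ?_
    filter_upwards [Ioo_mem_nhdsLT_of_mem ⟨hTpos, le_refl T⟩] with t ht
    exact hmemC t ht
  have hfront : h T ∈ frontier C := by
    rw [hCopen.frontier_eq]; exact ⟨hclos, hTnotC⟩
  calc Metric.infDist y (frontier C) ≤ dist y (h T) := Metric.infDist_le_dist_of_mem hfront
    _ = T * dist y z := by
        rw [dist_eq_norm, dist_eq_norm, hh]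
        simp only [sub_add_cancel_left]
        rw [norm_neg, norm_smul, Real.norm_eq_abs, abs_of_nonneg hT0, norm_sub_rev]
    _ ≤ dist y z := by nlinarith [dist_nonneg (x := y) (y := z)]

set_option maxHeartbeats 1000000 in
lemma aux_key (M mR Δ ny B I t : ℝ) (hM : 1 ≤ M) (hm : 1 ≤ mR) (hΔ : 0 < Δ)
    (hny : 0 ≤ ny) (hΔny : Δ ≤ ny) (ht : 0 ≤ t)
    (hIB : -I ≤ B) (hBub : B ≤ M * ny) (hBlb : -(M * ny) ≤ B)
    (hkey : -I + Δ/2 * t ≤ M * (ny + Δ/2)) :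
    -I + mR * Real.log (1 + t) ≤
      B + (Real.log (6*M) + Real.log mR + Real.log 2 + 1) * mR
        + 3 * mR * Real.log (1 + 1/Δ) + 2 * mR * Real.log (1 + ny) := by
  have hM0 : 0 < M := lt_of_lt_of_le one_pos hM
  have hδ : 0 < Δ/2 := by linarith
  set δ := Δ/2 with hδdef
  set r := B + I with hrdef
  have hr : 0 ≤ r := by simp only [hrdef]; linarith
  set K := 1 + (M * (ny + δ) - B) / δ with hKdef
  have hnum : 0 ≤ M * (ny + δ) - B := by nlinarith
  have hK1 : 1 ≤ K := by
    have h0 : 0 ≤ (M * (ny + δ) - B) / δ := div_nonneg hnum hδ.le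
    rw [hKdef]; linarith
  have hK0 : 0 < K := lt_of_lt_of_le one_pos hK1
  have hrδ : 0 ≤ r / δ := div_nonneg hr hδ.le
  -- 1 + t ≤ K * (1 + r/δ)
  have ht2 : 1 + t ≤ K * (1 + r / δ) := by
    have e1 : (M * (ny + δ) - B) / δ * δ = M * (ny + δ) - B := div_mul_cancel₀ _ hδ.ne'
    have e2 : r / δ * δ = r := div_mul_cancel₀ _ hδ.ne'
    have h1 : (1 + t) * δ ≤ (K + r / δ) * δ := by nlinarith
    have h2 : 1 + t ≤ K + r / δ := le_of_mul_le_mul_right h1 hδ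
    nlinarith
  have h1t : (0:ℝ) < 1 + t := by linarith
  have hlog1 : Real.log (1 + t) ≤ Real.log K + Real.log (1 + r / δ) := by
    calc Real.log (1 + t) ≤ Real.log (K * (1 + r / δ)) := Real.log_le_log h1t ht2
      _ = Real.log K + Real.log (1 + r / δ) := Real.log_mul hK0.ne' (by linarith)
  have hlog2 : mR * Real.log (1 + r / δ) - r ≤ mR * Real.log mR + mR * Real.log (1 + 1/δ) := by
    have := aux_log mR δ (r / δ) hm hδ hrδ
    rwa [mul_div_cancel₀ _ hδ.ne'] at this
  have hlog3 : Real.log (1 + 1/δ) ≤ Real.log 2 + Real.log (1 + 1/Δ) := by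
    have h1 : 1 + 1/δ ≤ 2 * (1 + 1/Δ) := by
      rw [hδdef]
      have : 1 / (Δ/2) = 2 * (1/Δ) := by field_simp
      rw [this]; have : 0 < 1/Δ := by positivity
      linarith
    calc Real.log (1 + 1/δ) ≤ Real.log (2 * (1 + 1/Δ)) :=
          Real.log_le_log (by positivity) h1
      _ = Real.log 2 + Real.log (1 + 1/Δ) := Real.log_mul two_ne_zero (by positivity)
  have hlog4 : Real.log K ≤ Real.log (6*M) + Real.log (1 + ny) + Real.log (1 + 1/Δ) := by
    have h1 : K ≤ 1 + 6 * M * ny * (1/Δ) := by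
      have hnum2 : M * (ny + δ) - B ≤ 3 * M * ny := by nlinarith
      have hd : (M * (ny + δ) - B) / δ ≤ 3 * M * ny / δ := (div_le_div_iff_of_pos_right hδ).mpr hnum2
      have e : 3 * M * ny / δ = 6 * M * ny * (1/Δ) := by rw [hδdef]; field_simp; ring
      rw [e] at hd; rw [hKdef]; linarith
    have h2 : 1 + 6 * M * ny * (1/Δ) ≤ 6*M * ((1 + ny) * (1 + 1/Δ)) := by
      have hx : 0 ≤ 1/Δ := by positivity
      nlinarith
    have a1 : (1 + ny) ≠ 0 := by positivity
    have a2 : (1 + 1/Δ) ≠ 0 := by positivity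
    have a3 : (6*M) ≠ 0 := by positivity
    calc Real.log K ≤ Real.log (6*M * ((1 + ny) * (1 + 1/Δ))) :=
          Real.log_le_log hK0 (h1.trans h2)
      _ = Real.log (6*M) + Real.log (1 + ny) + Real.log (1 + 1/Δ) := by
          rw [Real.log_mul a3 (mul_ne_zero a1 a2), Real.log_mul a1 a2]; ring
  -- nonnegativity of the logs
  have hl1 : 0 ≤ Real.log (1 + 1/Δ) := Real.log_nonneg (le_add_of_nonneg_right (by positivity))
  have hl2 : 0 ≤ Real.log (1 + ny) := Real.log_nonneg (by linarith)
  have hl3 : 0 ≤ Real.log mR := Real.log_nonneg hm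
  have hl4 : 0 ≤ Real.log 2 := Real.log_nonneg one_le_two
  have hl5 : 0 ≤ Real.log (6*M) := Real.log_nonneg (by nlinarith)
  have hmR0 : (0:ℝ) ≤ mR := by linarith
  have hm1 : mR * Real.log (1 + t) ≤ mR * (Real.log K + Real.log (1 + r / δ)) :=
    mul_le_mul_of_nonneg_left hlog1 hmR0
  have hm3 : mR * Real.log (1 + 1/δ) ≤ mR * (Real.log 2 + Real.log (1 + 1/Δ)) :=
    mul_le_mul_of_nonneg_left hlog3 hmR0
  have hm4 : mR * Real.log K ≤ mR * (Real.log (6*M) + Real.log (1 + ny) + Real.log (1 + 1/Δ)) :=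
    mul_le_mul_of_nonneg_left hlog4 hmR0
  have hIr : -I = B - r := by rw [hrdef]; ring
  have p1 : 0 ≤ mR * Real.log (1 + 1/Δ) := mul_nonneg hmR0 hl1
  have p2 : 0 ≤ mR * Real.log (1 + ny) := mul_nonneg hmR0 hl2
  have e : (Real.log (6*M) + Real.log mR + Real.log 2 + 1) * mR
      = mR * Real.log (6*M) + mR * Real.log mR + mR * Real.log 2 + mR := by ring
  have e2 : mR * (Real.log K + Real.log (1 + r / δ))
      = mR * Real.log K + mR * Real.log (1 + r / δ) := by ring
  have e3 : mR * (Real.log 2 + Real.log (1 + 1/Δ))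
      = mR * Real.log 2 + mR * Real.log (1 + 1/Δ) := by ring
  have e4 : mR * (Real.log (6*M) + Real.log (1 + ny) + Real.log (1 + 1/Δ))
      = mR * Real.log (6*M) + mR * Real.log (1 + ny) + mR * Real.log (1 + 1/Δ) := by ring
  rw [e2] at hm1; rw [e3] at hm3; rw [e4] at hm4
  linarith [hm1, hlog2, hm3, hm4, p1, p2]

theorem stmt_13 (n : ℕ) (C : Set (EuclideanSpace ℝ (Fin n)))
    (hCopen : IsOpen C) (hCconv : Convex ℝ C) (hCne : C.Nonempty)
    (hCcone : ∀ x ∈ C, ∀ t : ℝ, 0 < t → t • x ∈ C)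
    (hacute : ∀ x : EuclideanSpace ℝ (Fin n), x ≠ 0 →
      ¬ (x ∈ closure C ∧ -x ∈ closure C))
    (b : EuclideanSpace ℝ (Fin n) → ℝ)
    (hbconv : ConvexOn ℝ (closure C) b) (hbcont : ContinuousOn b (closure C))
    (hbhom : ∀ y ∈ closure C, ∀ t : ℝ, 0 < t → b (t • y) = t * b y)
    (m : ℕ) (hm : 0 < m) :
    ∃ d : ℝ, 0 < d ∧ ∀ y ∈ C,
      ∀ ξ ∈ {ξ : EuclideanSpace ℝ (Fin n) | ∀ w ∈ C, -⟪ξ, w⟫ ≤ b w},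
        -⟪ξ, y⟫ + m * Real.log (1 + ‖ξ‖) ≤
          b y + d * m +
            3 * m * Real.log (1 + 1 / Metric.infDist y (frontier C)) +
            2 * m * Real.log (1 + ‖y‖) := by
  have hmR : (1:ℝ) ≤ (m:ℝ) := by exact_mod_cast hm
  rcases subsingleton_or_nontrivial (EuclideanSpace ℝ (Fin n)) with hsub | hnt
  · -- trivial space
    refine ⟨1, one_pos, fun y hy ξ hξ => ?_⟩
    have hξ0 : ξ = 0 := Subsingleton.elim _ _
    have hby : 0 ≤ b y := by
      have := hξ y hy
      rw [hξ0] at this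
      simpa using this
    have hl1 : 0 ≤ Real.log (1 + 1 / Metric.infDist y (frontier C)) :=
      Real.log_nonneg (le_add_of_nonneg_right (one_div_nonneg.2 Metric.infDist_nonneg))
    have hl2 : 0 ≤ Real.log (1 + ‖y‖) := Real.log_nonneg (by simp [norm_nonneg])
    rw [hξ0]
    simp only [inner_zero_left, norm_zero, add_zero, Real.log_one, mul_zero, neg_zero, zero_add]
    have h3 : 0 ≤ 3 * (m:ℝ) * Real.log (1 + 1 / Metric.infDist y (frontier C)) := by positivity
    have h4 : 0 ≤ 2 * (m:ℝ) * Real.log (1 + ‖y‖) := by positivity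
    linarith
  · -- nontrivial space
    obtain ⟨x0, hx0⟩ := exists_ne (0 : EuclideanSpace ℝ (Fin n))
    -- 0 ∉ C
    have h0C : (0 : EuclideanSpace ℝ (Fin n)) ∉ C := by
      intro h0
      obtain ⟨ε, hε, hball⟩ := Metric.isOpen_iff.1 hCopen 0 h0
      set x := (ε / (2 * ‖x0‖)) • x0 with hxdef
      have hnx0 : (0:ℝ) < ‖x0‖ := norm_pos_iff.2 hx0
      have hxnorm : ‖x‖ = ε / 2 := by
        rw [hxdef, norm_smul, Real.norm_eq_abs, abs_of_pos (by positivity)]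
        field_simp
      have hxC : x ∈ C := hball (Metric.mem_ball.2 (by rw [dist_zero_right, hxnorm]; linarith))
      have hxC' : -x ∈ C := hball (Metric.mem_ball.2 (by rw [dist_zero_right, norm_neg, hxnorm]; linarith))
      have hxne : x ≠ 0 := by
        rw [hxdef]; exact smul_ne_zero (by positivity) hx0
      exact hacute x hxne ⟨subset_closure hxC, subset_closure hxC'⟩
    -- 0 ∈ closure C
    have h0cl : (0 : EuclideanSpace ℝ (Fin n)) ∈ closure C := by
      obtain ⟨x, hx⟩ := hCne
      rw [Metric.mem_closure_iff]
      intro ε hε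
      refine ⟨(ε / (‖x‖ + 1)) • x, hCcone x hx _ (by positivity), ?_⟩
      rw [dist_zero_left, norm_smul, Real.norm_eq_abs, abs_of_pos (by positivity)]
      have hx1 : (0:ℝ) < ‖x‖ + 1 := by positivity
      rw [div_mul_eq_mul_div, div_lt_iff₀ hx1]
      nlinarith [norm_nonneg x]
    have h0fr : (0 : EuclideanSpace ℝ (Fin n)) ∈ frontier C := by
      rw [hCopen.frontier_eq]; exact ⟨h0cl, h0C⟩
    -- closure C is a cone
    have hclcone : ∀ z ∈ closure C, ∀ t : ℝ, 0 < t → t • z ∈ closure C := by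
      intro z hz t ht
      exact (Set.MapsTo.closure (fun x hx => hCcone x hx t ht)
        (continuous_const_smul t)) hz
    -- the bound M
    have hScompact : IsCompact (closure C ∩ Metric.sphere (0 : EuclideanSpace ℝ (Fin n)) 1) :=
      (isCompact_sphere (0 : EuclideanSpace ℝ (Fin n)) 1).inter_left isClosed_closure
    obtain ⟨M0, hM0⟩ := hScompact.exists_bound_of_continuousOn
      (hbcont.mono Set.inter_subset_left)
    set M := max M0 1 with hMdef
    have hM1 : (1:ℝ) ≤ M := le_max_right _ _
    have hMpos : (0:ℝ) < M := lt_of_lt_of_le one_pos hM1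
    have hM : ∀ z ∈ closure C, |b z| ≤ M * ‖z‖ := by
      intro z hz
      rcases eq_or_ne z 0 with rfl | hz0
      · have h2 := hbhom 0 hz 2 two_pos
        rw [smul_zero] at h2
        have : b 0 = 0 := by linarith
        simp [this]
      · have hnz : (0:ℝ) < ‖z‖ := norm_pos_iff.2 hz0
        set u := ‖z‖⁻¹ • z with hudef
        have humem : u ∈ closure C := hclcone z hz _ (inv_pos.2 hnz)
        have hunorm : ‖u‖ = 1 := norm_smul_inv_norm hz0
        have husphere : u ∈ Metric.sphere (0 : EuclideanSpace ℝ (Fin n)) 1 := by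
          simp [Metric.mem_sphere, dist_zero_right, hunorm]
        have hbu : |b u| ≤ M := le_trans (by
          simpa [Real.norm_eq_abs] using hM0 u ⟨humem, husphere⟩) (le_max_left _ _)
        have hz_eq : ‖z‖ • u = z := by
          rw [hudef, smul_smul, mul_inv_cancel₀ hnz.ne', one_smul]
        have hbz : b z = ‖z‖ * b u := by
          have h := hbhom u humem ‖z‖ hnz
          rwa [hz_eq] at h
        rw [hbz, abs_mul, abs_of_pos hnz, mul_comm M ‖z‖]
        exact mul_le_mul_of_nonneg_left hbu hnz.le
    -- choose d
    refine ⟨Real.log (6*M) + Real.log m + Real.log 2 + 1, by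
      have : 0 ≤ Real.log (6*M) := Real.log_nonneg (by nlinarith)
      have : 0 ≤ Real.log (m:ℝ) := Real.log_nonneg hmR
      have : 0 ≤ Real.log 2 := Real.log_nonneg one_le_two
      linarith, fun y hy ξ hξ => ?_⟩
    set Δ := Metric.infDist y (frontier C) with hΔdef
    have hyfr : y ∉ frontier C := by
      intro h
      rw [hCopen.frontier_eq] at h
      exact h.2 hy
    have hΔpos : 0 < Δ :=
      (IsClosed.notMem_iff_infDist_pos isClosed_frontier ⟨0, h0fr⟩).1 hyfr
    have hΔle : Δ ≤ ‖y‖ := by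
      have := Metric.infDist_le_dist_of_mem (x := y) h0fr
      rwa [dist_zero_right] at this
    have hby : -⟪ξ, y⟫ ≤ b y := hξ y hy
    have hycl : y ∈ closure C := subset_closure hy
    have hbyub : b y ≤ M * ‖y‖ := le_trans (le_abs_self _) (hM y hycl)
    have hbylb : -(M * ‖y‖) ≤ b y := neg_le_of_abs_le (hM y hycl)
    rcases eq_or_ne ξ 0 with rfl | hξ0
    · simp only [inner_zero_left, norm_zero, add_zero, Real.log_one, mul_zero,
        neg_zero, zero_add]
      have hby0 : 0 ≤ b y := by simpa using hby
      have hl1 : 0 ≤ Real.log (1 + 1/Δ) :=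
        Real.log_nonneg (le_add_of_nonneg_right (by positivity))
      have hl2 : 0 ≤ Real.log (1 + ‖y‖) := Real.log_nonneg (by simp [norm_nonneg])
      have hd : 0 ≤ (Real.log (6*M) + Real.log m + Real.log 2 + 1) * m := by
        have : 0 ≤ Real.log (6*M) := Real.log_nonneg (by nlinarith)
        have : 0 ≤ Real.log (m:ℝ) := Real.log_nonneg hmR
        have : 0 ≤ Real.log 2 := Real.log_nonneg one_le_two
        positivity
      have h3 : 0 ≤ 3 * (m:ℝ) * Real.log (1 + 1/Δ) := by positivity
      have h4 : 0 ≤ 2 * (m:ℝ) * Real.log (1 + ‖y‖) := by positivity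
      linarith
    · -- ξ ≠ 0
      have hnξ : (0:ℝ) < ‖ξ‖ := norm_pos_iff.2 hξ0
      set c := Δ/2 * ‖ξ‖⁻¹ with hcdef
      have hcpos : 0 < c := by positivity
      set w := y - c • ξ with hwdef
      have hdistyw : dist y w = Δ/2 := by
        rw [hwdef, dist_eq_norm]
        simp only [sub_sub_cancel]
        rw [norm_smul, Real.norm_eq_abs, abs_of_pos hcpos, hcdef]
        field_simp
      have hwC : w ∈ C := by
        by_contra hwC
        have := aux_seg hCopen hy hwC
        rw [hdistyw] at this
        linarith
      have hwin : -⟪ξ, w⟫ ≤ b w := hξ w hwC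
      have hinner : ⟪ξ, w⟫ = ⟪ξ, y⟫ - Δ/2 * ‖ξ‖ := by
        rw [hwdef, inner_sub_right, real_inner_smul_right, real_inner_self_eq_norm_mul_norm,
          hcdef]
        field_simp
      have hbw : b w ≤ M * (‖y‖ + Δ/2) := by
        have h1 : b w ≤ M * ‖w‖ := le_trans (le_abs_self _) (hM w (subset_closure hwC))
        have h2 : ‖w‖ ≤ ‖y‖ + Δ/2 := by
          calc ‖w‖ ≤ ‖y‖ + ‖c • ξ‖ := by rw [hwdef]; exact norm_sub_le _ _
            _ = ‖y‖ + Δ/2 := by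
                rw [norm_smul, Real.norm_eq_abs, abs_of_pos hcpos, hcdef]; field_simp
        calc b w ≤ M * ‖w‖ := h1
          _ ≤ M * (‖y‖ + Δ/2) := mul_le_mul_of_nonneg_left h2 hMpos.le
      have hkey : -⟪ξ, y⟫ + Δ/2 * ‖ξ‖ ≤ M * (‖y‖ + Δ/2) := by
        rw [hinner] at hwin; linarith
      have := aux_key M m Δ ‖y‖ (b y) ⟪ξ, y⟫ ‖ξ‖ hM1 hmR hΔpos (norm_nonneg y) hΔle
        (norm_nonneg ξ) hby hbyub hbylb hkey
      linarith
end
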